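/- Let T be a nonempty heavy family of 3-element subsets of [n] and let H = ↓T. Then the number of 2-element sets in H is at least twice the number of 1-element sets in H; that is, |H ∩ L_2| ≥ 2·|H ∩ L_1|. -/
import Mathlib


open scoped Classical

/-- The width of a finite family of finite sets: the maximum size of an
antichain (under inclusion) contained in the family. -/
noncomputable def width (F : Finset (Finset ℕ)) : ℕ :=
  (F.powerset.filter (fun A => ∀ x ∈ A, ∀ y ∈ A, x ≠ y → ¬ x ⊆ y)).sup Finset.card

/-- The downset generated by a family of finite sets. -/
def downGen (T : Finset (Finset ℕ)) : Finset (Finset ℕ) :=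
  T.biUnion Finset.powerset

lemma mem_downGen {T : Finset (Finset ℕ)} {x : Finset ℕ} :
    x ∈ downGen T ↔ ∃ t ∈ T, x ⊆ t := by
  simp [downGen, Finset.mem_biUnion, Finset.mem_powerset]

lemma antichain_card_le {T A : Finset (Finset ℕ)} (hA : A ⊆ downGen T)
    (hanti : ∀ x ∈ A, ∀ y ∈ A, x ≠ y → ¬ x ⊆ y) :
    A.card ≤ width (downGen T) := by
  apply Finset.le_sup (f := Finset.card)
  simp only [Finset.mem_filter, Finset.mem_powerset]
  exact ⟨hA, hanti⟩

lemma key (N : ℕ) : ∀ (n : ℕ) (T : Finset (Finset ℕ)), T.card ≤ N →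
    (∀ A ∈ T, A ⊆ Finset.Icc 1 n) → (∀ A ∈ T, A.card = 3) → T.Nonempty →
    width (downGen T) ≤ T.card →
    2 * ((downGen T).filter (fun A => A.card = 1)).card ≤
      ((downGen T).filter (fun A => A.card = 2)).card := by
  induction N with
  | zero =>
    intro n T hle _ _ hne _
    rw [Nat.le_zero, Finset.card_eq_zero] at hle
    subst hle
    exact absurd hne (by simp)
  | succ N ih =>
    intro n T hcard hT hT3 hne heavy
    set H := downGen T with hH
    have hmemH : ∀ x : Finset ℕ, x ∈ H ↔ ∃ t ∈ T, x ⊆ t := fun x => mem_downGen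
    set V1 := H.filter (fun A => A.card = 1) with hV1
    set E2 := H.filter (fun A => A.card = 2) with hE2
    set W := T.biUnion (fun t => t) with hW
    have hWmem : ∀ w, w ∈ W ↔ ∃ t ∈ T, w ∈ t := by
      intro w; simp [hW]
    have hV1img : V1 = W.image (fun w => ({w} : Finset ℕ)) := by
      ext x
      constructor
      · intro hx
        rw [hV1, Finset.mem_filter] at hx
        obtain ⟨hxH, hx1⟩ := hx
        obtain ⟨w, rfl⟩ := Finset.card_eq_one.mp hx1
        obtain ⟨t, ht, hsub⟩ := (hmemH _).mp hxH
        exact Finset.mem_image.mpr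
          ⟨w, (hWmem w).mpr ⟨t, ht, hsub (Finset.mem_singleton_self w)⟩, rfl⟩
      · intro hx
        obtain ⟨w, hw, rfl⟩ := Finset.mem_image.mp hx
        obtain ⟨t, ht, hwt⟩ := (hWmem w).mp hw
        refine Finset.mem_filter.mpr ⟨(hmemH _).mpr ⟨t, ht, ?_⟩, Finset.card_singleton w⟩
        simpa using hwt
    have hV1W : V1.card = W.card := by
      rw [hV1img]
      exact Finset.card_image_of_injective _ Finset.singleton_injective
    have heW : ∀ e ∈ E2, ∀ w ∈ e, w ∈ W := by
      intro e he w hwe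
      rw [hE2, Finset.mem_filter] at he
      obtain ⟨t, ht, hsub⟩ := (hmemH _).mp he.1
      exact (hWmem w).mpr ⟨t, ht, hsub hwe⟩
    have heC : ∀ e ∈ E2, e.card = 2 := by
      intro e he; rw [hE2, Finset.mem_filter] at he; exact he.2
    by_cases hall : ∀ v ∈ W, 4 ≤ (E2.filter (fun e => v ∈ e)).card
    · -- handshake case
      have hsum : ∑ v ∈ W, (E2.filter (fun e => v ∈ e)).card = 2 * E2.card := by
        calc ∑ v ∈ W, (E2.filter (fun e => v ∈ e)).card
            = ∑ v ∈ W, ∑ e ∈ E2, (if v ∈ e then 1 else 0) := by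
              refine Finset.sum_congr rfl fun v _ => ?_
              exact Finset.card_filter _ _
          _ = ∑ e ∈ E2, ∑ v ∈ W, (if v ∈ e then 1 else 0) := Finset.sum_comm
          _ = ∑ e ∈ E2, (W.filter (fun v => v ∈ e)).card := by
              refine Finset.sum_congr rfl fun e _ => ?_
              exact (Finset.card_filter _ _).symm
          _ = ∑ e ∈ E2, 2 := by
              refine Finset.sum_congr rfl fun e he => ?_
              have : W.filter (fun v => v ∈ e) = e := by
                ext v
                simp only [Finset.mem_filter]
                exact ⟨fun h => h.2, fun h => ⟨heW e he v h, h⟩⟩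
              rw [this, heC e he]
          _ = 2 * E2.card := by
              rw [Finset.sum_const, smul_eq_mul, mul_comm]
      have h4 : W.card * 4 ≤ ∑ v ∈ W, (E2.filter (fun e => v ∈ e)).card := by
        have := Finset.card_nsmul_le_sum W (fun v => (E2.filter (fun e => v ∈ e)).card) 4 hall
        simpa using this
      omega
    · push_neg at hall
      obtain ⟨v, hvW, hdegle⟩ := hall
      have heIcc : ∀ e ∈ E2, e ⊆ Finset.Icc 1 n := by
        intro e he
        rw [hE2, Finset.mem_filter] at he
        obtain ⟨t, ht, hsub⟩ := (hmemH _).mp he.1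
        exact hsub.trans (hT t ht)
      set Nv := (Finset.Icc 1 n).filter (fun w => w ≠ v ∧ insert v {w} ∈ E2) with hNv
      set Tv := T.filter (fun t => v ∈ t) with hTv
      have hvNv : v ∉ Nv := by
        intro h; rw [hNv, Finset.mem_filter] at h; exact h.2.1 rfl
      have hNvIcc : Nv ⊆ Finset.Icc 1 n := Finset.filter_subset _ _
      -- the edges at v are in bijection with Nv
      have hEvNv : E2.filter (fun e => v ∈ e) = Nv.image (fun w => insert v {w}) := by
        ext e
        constructor
        · intro he
          rw [Finset.mem_filter] at he
          obtain ⟨heE, hve⟩ := he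
          obtain ⟨x, y, hxy, hexy⟩ := Finset.card_eq_two.mp (heC e heE)
          have hvxy : v = x ∨ v = y := by
            have := hve; rw [hexy] at this; simpa using this
          have key : ∀ x y : ℕ, x ≠ y → e = {x, y} → v = x →
              e ∈ Nv.image (fun w => insert v {w}) := by
            intro x y hxy hexy hvx
            refine Finset.mem_image.mpr ⟨y, ?_, ?_⟩
            · rw [hNv, Finset.mem_filter]
              have hyIcc : y ∈ Finset.Icc 1 n := heIcc e heE (by rw [hexy]; simp)
              have hyv : y ≠ v := fun h => hxy (hvx.symm.trans h.symm)
              have hins : insert v {y} = e := by rw [hexy, hvx]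
              exact ⟨hyIcc, hyv, by rw [hins]; exact heE⟩
            · rw [hexy, hvx]
          rcases hvxy with hvx | hvy
          · exact key x y hxy hexy hvx
          · exact key y x (Ne.symm hxy) (by rw [hexy]; exact Finset.pair_comm x y) hvy
        · intro he
          obtain ⟨w, hw, rfl⟩ := Finset.mem_image.mp he
          rw [hNv, Finset.mem_filter] at hw
          exact Finset.mem_filter.mpr ⟨hw.2.2, Finset.mem_insert_self v _⟩
      have hinjNv : Set.InjOn (fun w => insert v ({w} : Finset ℕ)) Nv := by
        intro w1 h1 w2 h2 heq
        have hw1 : w1 ≠ v := (Finset.mem_filter.mp h1).2.1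
        have heq' : insert v ({w1} : Finset ℕ) = insert v {w2} := heq
        have : w1 ∈ insert v ({w2} : Finset ℕ) := by
          rw [← heq']; simp
        simpa [hw1] using this
      have hdegNv : (E2.filter (fun e => v ∈ e)).card = Nv.card := by
        rw [hEvNv, Finset.card_image_of_injOn hinjNv]
      -- erase lemma
      have herase : ∀ t ∈ Tv, t.erase v ⊆ Nv ∧ (t.erase v).card = 2 := by
        intro t ht
        rw [hTv, Finset.mem_filter] at ht
        obtain ⟨htT, hvt⟩ := ht
        constructor
        · intro w hw
          have hwv : w ≠ v := Finset.ne_of_mem_erase hw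
          have hwt : w ∈ t := Finset.mem_of_mem_erase hw
          rw [hNv, Finset.mem_filter]
          refine ⟨hT t htT hwt, hwv, ?_⟩
          rw [hE2, Finset.mem_filter]
          constructor
          · exact (hmemH _).mpr ⟨t, htT, by
              intro u hu
              rcases Finset.mem_insert.mp hu with h | h
              · rw [h]; exact hvt
              · rw [Finset.mem_singleton.mp h]; exact hwt⟩
          · rw [Finset.card_insert_of_notMem (by simp [Ne.symm hwv]), Finset.card_singleton]
        · rw [Finset.card_erase_of_mem hvt, hT3 t htT]
      -- Lemma A : Nv.card ≤ Tv.card via swap antichain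
      have hlemA : Nv.card ≤ Tv.card := by
        set A3 := (T.filter (fun t => v ∉ t)) ∪ (E2.filter (fun e => v ∈ e)) with hA3
        have hA3H : A3 ⊆ H := by
          intro x hx
          rcases Finset.mem_union.mp hx with h | h
          · exact (hmemH _).mpr ⟨x, Finset.mem_of_mem_filter x h, Finset.Subset.refl x⟩
          · exact Finset.mem_of_mem_filter x (Finset.filter_subset _ _ h)
        have hanti3 : ∀ x ∈ A3, ∀ y ∈ A3, x ≠ y → ¬ x ⊆ y := by
          intro x hx y hy hne hsub
          rcases Finset.mem_union.mp hx with h1 | h1 <;> rcases Finset.mem_union.mp hy with h2 | h2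
          · have hx3 := hT3 x (Finset.mem_of_mem_filter x h1)
            have hy3 := hT3 y (Finset.mem_of_mem_filter y h2)
            exact hne (Finset.eq_of_subset_of_card_le hsub (by omega))
          · have hx3 := hT3 x (Finset.mem_of_mem_filter x h1)
            have hy2 := heC y (Finset.mem_of_mem_filter y h2)
            have := Finset.card_le_card hsub; omega
          · have := (Finset.mem_filter.mp h1).2
            have := (Finset.mem_filter.mp h2).2
            exact (Finset.mem_filter.mp h2).2 (hsub (Finset.mem_filter.mp h1).2)
          · have hx2 := heC x (Finset.mem_of_mem_filter x h1)
            have hy2 := heC y (Finset.mem_of_mem_filter y h2)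
            exact hne (Finset.eq_of_subset_of_card_le hsub (by omega))
        have hdisj : Disjoint (T.filter (fun t => v ∉ t)) (E2.filter (fun e => v ∈ e)) := by
          rw [Finset.disjoint_left]
          intro x h1 h2
          exact (Finset.mem_filter.mp h1).2 (Finset.mem_filter.mp h2).2
        have hcard3 : A3.card = (T.filter (fun t => v ∉ t)).card + (E2.filter (fun e => v ∈ e)).card :=
          Finset.card_union_of_disjoint hdisj
        have hsplit : (T.filter (fun t => v ∈ t)).card + (T.filter (fun t => ¬ v ∈ t)).card = T.card :=
          Finset.card_filter_add_card_filter_not _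
        have hle := (antichain_card_le hA3H hanti3).trans heavy
        rw [hTv]
        omega
      -- Tv.card ≤ choose (Nv.card) 2
      have hTvimg : Tv.image (fun t => t.erase v) ⊆ Nv.powersetCard 2 := by
        intro s hs
        obtain ⟨t, ht, rfl⟩ := Finset.mem_image.mp hs
        rw [Finset.mem_powersetCard]
        exact ⟨(herase t ht).1, (herase t ht).2⟩
      have hTverase_inj : Set.InjOn (fun t => Finset.erase t v) Tv := by
        intro t1 h1 t2 h2 heq
        have hv1 : v ∈ t1 := (Finset.mem_filter.mp h1).2
        have hv2 : v ∈ t2 := (Finset.mem_filter.mp h2).2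
        have := congrArg (insert v) heq
        simpa [Finset.insert_erase hv1, Finset.insert_erase hv2] using this
      have hTvle : Tv.card ≤ Nat.choose Nv.card 2 := by
        calc Tv.card = (Tv.image (fun t => t.erase v)).card :=
              (Finset.card_image_of_injOn hTverase_inj).symm
          _ ≤ (Nv.powersetCard 2).card := Finset.card_le_card hTvimg
          _ = Nat.choose Nv.card 2 := by rw [Finset.card_powersetCard]
      -- 2 ≤ Nv.card
      have hNv2 : 2 ≤ Nv.card := by
        obtain ⟨t0, ht0, hvt0⟩ := (hWmem v).mp hvW
        have ht0Tv : t0 ∈ Tv := Finset.mem_filter.mpr ⟨ht0, hvt0⟩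
        calc 2 = (t0.erase v).card := (herase t0 ht0Tv).2.symm
          _ ≤ Nv.card := Finset.card_le_card (herase t0 ht0Tv).1
      have hNv3 : Nv.card = 3 := by
        rw [hdegNv] at hdegle
        interval_cases h : Nv.card <;> simp_all <;> omega
      have hTv3 : Tv.card = 3 := by
        rw [hNv3] at hTvle hlemA
        have : Nat.choose 3 2 = 3 := by decide
        omega
      -- every 2-subset of Nv gives a triple
      have hins : ∀ s ⊆ Nv, s.card = 2 → insert v s ∈ T := by
        have himg_eq : Tv.image (fun t => t.erase v) = Nv.powersetCard 2 := by
          apply Finset.eq_of_subset_of_card_le hTvimg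
          rw [Finset.card_powersetCard, hNv3, Finset.card_image_of_injOn hTverase_inj, hTv3]
          decide
        intro s hsN hs2
        have : s ∈ Tv.image (fun t => t.erase v) := by
          rw [himg_eq, Finset.mem_powersetCard]; exact ⟨hsN, hs2⟩
        obtain ⟨t, ht, hte⟩ := Finset.mem_image.mp this
        have hvt : v ∈ t := (Finset.mem_filter.mp ht).2
        have : insert v s = t := by rw [← hte, Finset.insert_erase hvt]
        rw [this]
        exact Finset.mem_of_mem_filter t ht
  
      -- names for Nv's elements
      obtain ⟨a, b, c, hab, hac, hbc, hNvabc⟩ := Finset.card_eq_three.mp hNv3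
      have haNv : a ∈ Nv := by rw [hNvabc]; simp
      have hbNv : b ∈ Nv := by rw [hNvabc]; simp
      have hcNv : c ∈ Nv := by rw [hNvabc]; simp
      have hcard2 : ∀ x y : ℕ, x ≠ y → ({x, y} : Finset ℕ).card = 2 := by
        intro x y h
        rw [Finset.card_insert_of_notMem (by simp [h]), Finset.card_singleton]
      -- the reduced family
      set Tstar := insert Nv (T.filter (fun t => v ∉ t)) with hTstar
      have hTstarIcc : ∀ A ∈ Tstar, A ⊆ Finset.Icc 1 n := by
        intro A hA
        rcases Finset.mem_insert.mp hA with h | h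
        · rw [h]; exact hNvIcc
        · exact hT A (Finset.mem_of_mem_filter _ h)
      have hTstar3 : ∀ A ∈ Tstar, A.card = 3 := by
        intro A hA
        rcases Finset.mem_insert.mp hA with h | h
        · rw [h]; exact hNv3
        · exact hT3 A (Finset.mem_of_mem_filter _ h)
      have hTstarne : Tstar.Nonempty := ⟨Nv, Finset.mem_insert_self _ _⟩
      have hsplitT : (T.filter (fun t => v ∈ t)).card + (T.filter (fun t => ¬ v ∈ t)).card = T.card :=
        Finset.card_filter_add_card_filter_not _
      have hTfc : (T.filter (fun t => v ∉ t)).card + 3 = T.card := by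
        rw [hTv] at hTv3; omega
      have hT3le : 3 ≤ T.card := by omega
      have hTstarcard_le : Tstar.card ≤ N := by
        have h1 : Tstar.card ≤ (T.filter (fun t => v ∉ t)).card + 1 := Finset.card_insert_le _ _
        omega
      have hmemHstar : ∀ x : Finset ℕ, x ∈ downGen Tstar ↔ ∃ t ∈ Tstar, x ⊆ t := fun x => mem_downGen
      have hHstarv : ∀ x ∈ downGen Tstar, v ∉ x := by
        intro x hx hvx
        obtain ⟨t, ht, hsub⟩ := (hmemHstar x).mp hx
        rcases Finset.mem_insert.mp ht with h | h
        · exact hvNv (h ▸ hsub hvx)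
        · exact (Finset.mem_filter.mp h).2 (hsub hvx)
      have hsingH : ∀ w ∈ Nv, ({w} : Finset ℕ) ∈ H := by
        intro w hw
        have hE : insert v {w} ∈ E2 := (Finset.mem_filter.mp hw).2.2
        obtain ⟨t, ht, hsub⟩ := (hmemH _).mp (Finset.mem_of_mem_filter _ hE)
        exact (hmemH _).mpr ⟨t, ht, (Finset.subset_insert _ _).trans hsub⟩
      have hedgeE2 : ∀ e ⊆ Nv, e.card = 2 → e ∈ E2 := by
        intro e he hc
        exact Finset.mem_filter.mpr
          ⟨(hmemH _).mpr ⟨insert v e, hins e he hc, Finset.subset_insert _ _⟩, hc⟩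
      have hEstar : (downGen Tstar).filter (fun A => A.card = 2) = E2.filter (fun e => v ∉ e) := by
        ext e
        simp only [Finset.mem_filter]
        constructor
        · rintro ⟨heH, hc⟩
          have hv : v ∉ e := hHstarv e heH
          obtain ⟨t, ht, hsub⟩ := (hmemHstar e).mp heH
          rcases Finset.mem_insert.mp ht with h | h
          · exact ⟨hedgeE2 e (by rw [← h]; exact hsub) hc, hv⟩
          · exact ⟨Finset.mem_filter.mpr
              ⟨(hmemH _).mpr ⟨t, Finset.mem_of_mem_filter _ h, hsub⟩, hc⟩, hv⟩
        · rintro ⟨heE2, hv⟩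
          have hc := heC e heE2
          have heH : e ∈ H := Finset.mem_of_mem_filter _ heE2
          obtain ⟨t, ht, hsub⟩ := (hmemH _).mp heH
          by_cases hvt : v ∈ t
          · have heNv : e ⊆ Nv := by
              intro u hu
              refine (herase t (Finset.mem_filter.mpr ⟨ht, hvt⟩)).1 ?_
              exact Finset.mem_erase.mpr ⟨fun h => hv (h ▸ hu), hsub hu⟩
            exact ⟨(hmemHstar _).mpr ⟨Nv, Finset.mem_insert_self _ _, heNv⟩, hc⟩
          · exact ⟨(hmemHstar _).mpr
              ⟨t, Finset.mem_insert.mpr (Or.inr (Finset.mem_filter.mpr ⟨ht, hvt⟩)), hsub⟩, hc⟩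
      have hVstar : (downGen Tstar).filter (fun A => A.card = 1) = V1.filter (fun x => v ∉ x) := by
        ext x
        simp only [Finset.mem_filter]
        constructor
        · rintro ⟨hxH, hc⟩
          have hv := hHstarv x hxH
          obtain ⟨w, rfl⟩ := Finset.card_eq_one.mp hc
          obtain ⟨t, ht, hsub⟩ := (hmemHstar _).mp hxH
          rcases Finset.mem_insert.mp ht with h | h
          · have hwNv : w ∈ Nv := h ▸ hsub (Finset.mem_singleton_self w)
            exact ⟨Finset.mem_filter.mpr ⟨hsingH w hwNv, Finset.card_singleton w⟩, hv⟩
          · exact ⟨Finset.mem_filter.mpr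
              ⟨(hmemH _).mpr ⟨t, Finset.mem_of_mem_filter _ h, hsub⟩, Finset.card_singleton w⟩, hv⟩
        · rintro ⟨hxV1, hv⟩
          have hxH : x ∈ H := Finset.mem_of_mem_filter _ hxV1
          have hc : x.card = 1 := (Finset.mem_filter.mp hxV1).2
          obtain ⟨t, ht, hsub⟩ := (hmemH _).mp hxH
          by_cases hvt : v ∈ t
          · have hxNv : x ⊆ Nv := by
              intro u hu
              refine (herase t (Finset.mem_filter.mpr ⟨ht, hvt⟩)).1 ?_
              exact Finset.mem_erase.mpr ⟨fun h => hv (h ▸ hu), hsub hu⟩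
            exact ⟨(hmemHstar _).mpr ⟨Nv, Finset.mem_insert_self _ _, hxNv⟩, hc⟩
          · exact ⟨(hmemHstar _).mpr
              ⟨t, Finset.mem_insert.mpr (Or.inr (Finset.mem_filter.mpr ⟨ht, hvt⟩)), hsub⟩, hc⟩
      have hEcards : (E2.filter (fun e => v ∉ e)).card + 3 = E2.card := by
        have h := Finset.card_filter_add_card_filter_not (s := E2) (p := fun e => v ∈ e)
        rw [hdegNv, hNv3] at h
        omega
      have hVcards : (V1.filter (fun x => v ∉ x)).card + 1 = V1.card := by
        have h := Finset.card_filter_add_card_filter_not (s := V1) (p := fun x => v ∈ x)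
        have hone : V1.filter (fun x => v ∈ x) = {({v} : Finset ℕ)} := by
          ext x
          simp only [Finset.mem_filter, Finset.mem_singleton]
          constructor
          · rintro ⟨hxV1, hvx⟩
            obtain ⟨w, rfl⟩ := Finset.card_eq_one.mp (Finset.mem_filter.mp hxV1).2
            have : v = w := Finset.mem_singleton.mp hvx
            rw [this]
          · rintro rfl
            obtain ⟨t0, ht0, hvt0⟩ := (hWmem v).mp hvW
            exact ⟨Finset.mem_filter.mpr ⟨(hmemH _).mpr ⟨t0, ht0, by simpa using hvt0⟩,
              Finset.card_singleton v⟩, Finset.mem_singleton_self v⟩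
        rw [hone, Finset.card_singleton] at h
        omega
      have hav : a ≠ v := by
        have h := haNv; rw [hNv, Finset.mem_filter] at h; exact h.2.1
      have hbv : b ≠ v := by
        have h := hbNv; rw [hNv, Finset.mem_filter] at h; exact h.2.1
      have hcv : c ≠ v := by
        have h := hcNv; rw [hNv, Finset.mem_filter] at h; exact h.2.1
      have hsub_abNv : ({a, b} : Finset ℕ) ⊆ Nv := by
        rw [hNvabc]; intro x hx
        rcases Finset.mem_insert.mp hx with rfl | hx
        · simp
        · rw [Finset.mem_singleton.mp hx]; simp
      have hsub_acNv : ({a, c} : Finset ℕ) ⊆ Nv := by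
        rw [hNvabc]; intro x hx
        rcases Finset.mem_insert.mp hx with rfl | hx
        · simp
        · rw [Finset.mem_singleton.mp hx]; simp
      have hsub_bcNv : ({b, c} : Finset ℕ) ⊆ Nv := by
        rw [hNvabc]; intro x hx
        rcases Finset.mem_insert.mp hx with rfl | hx
        · simp
        · rw [Finset.mem_singleton.mp hx]; simp
      have hheavystar : width (downGen Tstar) ≤ Tstar.card := by
        apply Finset.sup_le
        intro B hB
        rw [Finset.mem_filter, Finset.mem_powerset] at hB
        obtain ⟨hBsub, hanti⟩ := hB
        by_contra hbig
        push_neg at hbig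
        have hBv : ∀ x ∈ B, v ∉ x := fun x hx => hHstarv x (hBsub hx)
        have hTstar1 : 1 ≤ Tstar.card := Finset.card_pos.mpr hTstarne
        have hempty : (∅ : Finset ℕ) ∉ B := by
          intro h0
          obtain ⟨y, hy, hyne⟩ := Finset.exists_mem_ne (s := B) (by omega) (∅ : Finset ℕ)
          exact hanti ∅ h0 y hy (Ne.symm hyne) (Finset.empty_subset y)
        set Sing := B.filter (fun s => s.card = 1 ∧ s ⊆ Nv) with hSing
        set f : Finset ℕ → Finset ℕ :=
          fun s => if s = {a} then {a, c} else if s = {b} then {a, b} else {b, c} with hf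
        have hfa : f {a} = {a, c} := if_pos rfl
        have hfb : f {b} = {a, b} := by
          have h1 : ({b} : Finset ℕ) ≠ {a} := fun h => hab (Finset.singleton_injective h).symm
          simp [hf, h1]
        have hfc : f {c} = {b, c} := by
          have h1 : ({c} : Finset ℕ) ≠ {a} := fun h => hac (Finset.singleton_injective h).symm
          have h2 : ({c} : Finset ℕ) ≠ {b} := fun h => hbc (Finset.singleton_injective h).symm
          simp [hf, h1, h2]
        have hSingmem : ∀ s ∈ Sing, s = {a} ∨ s = {b} ∨ s = {c} := by
          intro s hs
          rw [hSing, Finset.mem_filter] at hs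
          obtain ⟨w, rfl⟩ := Finset.card_eq_one.mp hs.2.1
          have hw : w ∈ Nv := hs.2.2 (Finset.mem_singleton_self w)
          rw [hNvabc] at hw
          rcases Finset.mem_insert.mp hw with h | h
          · left; rw [h]
          rcases Finset.mem_insert.mp h with h | h
          · right; left; rw [h]
          · right; right; rw [Finset.mem_singleton.mp h]
        have hfprop : ∀ s ∈ Sing, s ⊆ f s ∧ f s ⊆ Nv ∧ (f s).card = 2 := by
          intro s hs
          rcases hSingmem s hs with rfl | rfl | rfl
          · rw [hfa]
            exact ⟨Finset.singleton_subset_iff.mpr (by simp), hsub_acNv, hcard2 a c hac⟩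
          · rw [hfb]
            exact ⟨Finset.singleton_subset_iff.mpr (by simp), hsub_abNv, hcard2 a b hab⟩
          · rw [hfc]
            exact ⟨Finset.singleton_subset_iff.mpr (by simp), hsub_bcNv, hcard2 b c hbc⟩
        have hd_ac_ab : ({a, c} : Finset ℕ) ≠ {a, b} := by
          intro h
          have hm : c ∈ ({a, b} : Finset ℕ) := by rw [← h]; simp
          simp only [Finset.mem_insert, Finset.mem_singleton] at hm
          rcases hm with h' | h'
          · exact hac h'.symm
          · exact hbc h'.symm
        have hd_ac_bc : ({a, c} : Finset ℕ) ≠ {b, c} := by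
          intro h
          have hm : a ∈ ({b, c} : Finset ℕ) := by rw [← h]; simp
          simp only [Finset.mem_insert, Finset.mem_singleton] at hm
          rcases hm with h' | h'
          · exact hab h'
          · exact hac h'
        have hd_ab_bc : ({a, b} : Finset ℕ) ≠ {b, c} := by
          intro h
          have hm : a ∈ ({b, c} : Finset ℕ) := by rw [← h]; simp
          simp only [Finset.mem_insert, Finset.mem_singleton] at hm
          rcases hm with h' | h'
          · exact hab h'
          · exact hac h'
        have hfinj : Set.InjOn f ↑Sing := by
          intro s1 h1 s2 h2 heq
          rcases hSingmem s1 (Finset.mem_coe.mp h1) with rfl | rfl | rfl <;>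
            rcases hSingmem s2 (Finset.mem_coe.mp h2) with rfl | rfl | rfl <;>
            simp only [hfa, hfb, hfc] at heq <;>
            first
              | rfl
              | exact absurd heq hd_ac_ab
              | exact absurd heq hd_ac_bc
              | exact absurd heq hd_ab_bc
              | exact absurd heq.symm hd_ac_ab
              | exact absurd heq.symm hd_ac_bc
              | exact absurd heq.symm hd_ab_bc
        set D := Sing.image f with hD
        have hDcard : D.card = Sing.card := Finset.card_image_of_injOn hfinj
        have hDprop : ∀ e ∈ D, (∃ s ∈ Sing, s ⊆ e) ∧ e ⊆ Nv ∧ e.card = 2 := by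
          intro e he
          obtain ⟨s, hs, rfl⟩ := Finset.mem_image.mp he
          exact ⟨⟨s, hs, (hfprop s hs).1⟩, (hfprop s hs).2.1, (hfprop s hs).2.2⟩
        have hSingB : Sing ⊆ B := Finset.filter_subset _ _
        have hSingcard1 : ∀ s ∈ Sing, s.card = 1 := by
          intro s hs; rw [hSing, Finset.mem_filter] at hs; exact hs.2.1
        have hDnotB : ∀ e ∈ D, e ∉ B := by
          intro e he heB
          obtain ⟨⟨s, hs, hse⟩, _, he2⟩ := hDprop e he
          have hs1 := hSingcard1 s hs
          refine hanti s (hSingB hs) e heB (fun h => ?_) hse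
          rw [h] at hs1; omega
        set X := Sing ∪ B.filter (fun x => x = Nv ∧ Nv ∉ T) with hX
        have hXB : X ⊆ B := Finset.union_subset hSingB (Finset.filter_subset _ _)
        have hXcard_le : X.card ≤ Sing.card + 1 := by
          have h1 : (B.filter (fun x => x = Nv ∧ Nv ∉ T)).card ≤ 1 := by
            refine Finset.card_le_one.mpr ?_
            intro x hx y hy
            rw [(Finset.mem_filter.mp hx).2.1, (Finset.mem_filter.mp hy).2.1]
          have h2 : X.card ≤ Sing.card + (B.filter (fun x => x = Nv ∧ Nv ∉ T)).card := by
            rw [hX]; exact Finset.card_union_le _ _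
          omega
        have hSingX : Sing ⊆ X := Finset.subset_union_left
        -- the replacement antichain
        set Y := insert (insert v {a}) (insert (insert v {b}) (insert (insert v {c}) D)) with hY
        have hvnotD : ∀ e ∈ D, v ∉ e := fun e he hv => hvNv ((hDprop e he).2.1 hv)
        have hvinsnotD : ∀ z : ℕ, insert v ({z} : Finset ℕ) ∉ D :=
          fun z h => hvnotD _ h (Finset.mem_insert_self v _)
        have hpairne : ∀ x y : ℕ, x ≠ v → x ≠ y →
            insert v ({x} : Finset ℕ) ≠ insert v {y} := by
          intro x y hx hxy h
          have hm : x ∈ insert v ({y} : Finset ℕ) := by rw [← h]; simp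
          simp only [Finset.mem_insert, Finset.mem_singleton] at hm
          rcases hm with h' | h'
          · exact hx h'
          · exact hxy h'
        have hvbnotin : insert v ({b} : Finset ℕ) ∉ insert (insert v ({c} : Finset ℕ)) D := by
          intro h
          rcases Finset.mem_insert.mp h with h | h
          · exact hpairne b c hbv hbc h
          · exact hvinsnotD b h
        have hvanotin : insert v ({a} : Finset ℕ) ∉
            insert (insert v ({b} : Finset ℕ)) (insert (insert v ({c} : Finset ℕ)) D) := by
          intro h
          rcases Finset.mem_insert.mp h with h | h
          · exact hpairne a b hav hab h
          rcases Finset.mem_insert.mp h with h | h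
          · exact hpairne a c hav hac h
          · exact hvinsnotD a h
        have hYcard : Y.card = D.card + 3 := by
          rw [hY, Finset.card_insert_of_notMem hvanotin, Finset.card_insert_of_notMem hvbnotin,
            Finset.card_insert_of_notMem (hvinsnotD c)]
        have hvaH : ∀ (z w : ℕ), insert v ({z, w} : Finset ℕ) ∈ T → z ≠ v →
            insert v ({z} : Finset ℕ) ∈ H := by
          intro z w hT' hz
          refine (hmemH _).mpr ⟨insert v {z, w}, hT', ?_⟩
          intro u hu
          rcases Finset.mem_insert.mp hu with rfl | hu
          · simp
          · rw [Finset.mem_singleton.mp hu]; simp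
        have hvabT : insert v ({a, b} : Finset ℕ) ∈ T := hins _ hsub_abNv (hcard2 a b hab)
        have hvacT : insert v ({a, c} : Finset ℕ) ∈ T := hins _ hsub_acNv (hcard2 a c hac)
        have hvbcT : insert v ({b, c} : Finset ℕ) ∈ T := hins _ hsub_bcNv (hcard2 b c hbc)
        have hYH : Y ⊆ H := by
          intro y hy
          rw [hY] at hy
          rcases Finset.mem_insert.mp hy with rfl | hy
          · exact hvaH a b hvabT hav
          rcases Finset.mem_insert.mp hy with rfl | hy
          · exact hvaH b a (by rwa [Finset.pair_comm]) hbv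
          rcases Finset.mem_insert.mp hy with rfl | hy
          · exact hvaH c a (by rwa [Finset.pair_comm]) hcv
          · exact Finset.mem_of_mem_filter _ (hedgeE2 y (hDprop y hy).2.1 (hDprop y hy).2.2)
        have hYcard2 : ∀ y ∈ Y, y.card = 2 := by
          intro y hy
          rw [hY] at hy
          rcases Finset.mem_insert.mp hy with rfl | hy
          · exact hcard2 v a (fun h => hav h.symm)
          rcases Finset.mem_insert.mp hy with rfl | hy
          · exact hcard2 v b (fun h => hbv h.symm)
          rcases Finset.mem_insert.mp hy with rfl | hy
          · exact hcard2 v c (fun h => hcv h.symm)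
          · exact (hDprop y hy).2.2
        have hYnotB : ∀ y ∈ Y, y ∉ B := by
          intro y hy
          rw [hY] at hy
          rcases Finset.mem_insert.mp hy with rfl | hy
          · exact fun hB' => hBv _ hB' (Finset.mem_insert_self v _)
          rcases Finset.mem_insert.mp hy with rfl | hy
          · exact fun hB' => hBv _ hB' (Finset.mem_insert_self v _)
          rcases Finset.mem_insert.mp hy with rfl | hy
          · exact fun hB' => hBv _ hB' (Finset.mem_insert_self v _)
          · exact hDnotB y hy
        set A' := (B \ X) ∪ Y with hA'
        have hdisjBY : Disjoint (B \ X) Y := by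
          rw [Finset.disjoint_right]
          intro y hy hyB
          exact hYnotB y hy (Finset.mem_sdiff.mp hyB).1
        have hA'card : A'.card = (B.card - X.card) + (D.card + 3) := by
          rw [hA', Finset.card_union_of_disjoint hdisjBY, Finset.card_sdiff_of_subset hXB, hYcard]
        have hXmem_sing : ∀ x ∈ B, x.card = 1 → x ⊆ Nv → x ∈ X :=
          fun x hx h1 h2 => hSingX (Finset.mem_filter.mpr ⟨hx, h1, h2⟩)
        have hA'H : A' ⊆ H := by
          intro x hx
          rcases Finset.mem_union.mp hx with hx | hx
          · obtain ⟨hxB, hxX⟩ := Finset.mem_sdiff.mp hx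
            obtain ⟨t, ht, hsub⟩ := (hmemHstar x).mp (hBsub hxB)
            rcases Finset.mem_insert.mp ht with heq | ht
            · rw [heq] at hsub
              by_cases hxNv : x = Nv
              · by_cases hNvT : Nv ∈ T
                · exact (hmemH _).mpr ⟨Nv, hNvT, hsub⟩
                · exact absurd (Finset.mem_union_right _
                    (Finset.mem_filter.mpr ⟨hxB, hxNv, hNvT⟩)) hxX
              · obtain ⟨w, hwNv, hwx⟩ := Finset.exists_of_ssubset ⟨hsub, fun h =>
                  hxNv (Finset.Subset.antisymm hsub h)⟩
                have hxe : x ⊆ Nv.erase w := by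
                  intro u hu
                  exact Finset.mem_erase.mpr ⟨fun h => hwx (h ▸ hu), hsub hu⟩
                have hec : (Nv.erase w).card = 2 := by
                  rw [Finset.card_erase_of_mem hwNv, hNv3]
                exact (hmemH _).mpr ⟨insert v (Nv.erase w),
                  hins _ (Finset.erase_subset _ _) hec,
                  hxe.trans (Finset.subset_insert _ _)⟩
            · exact (hmemH _).mpr ⟨t, Finset.mem_of_mem_filter _ ht, hsub⟩
          · exact hYH hx
        have hA'anti : ∀ x ∈ A', ∀ y ∈ A', x ≠ y → ¬ x ⊆ y := by
          have hcase_v : ∀ z : ℕ, z ∈ Nv → ∀ x, x ∈ B → x ∉ X →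
              x ⊆ insert v {z} → False := by
            intro z hz x hxB hxX hsub
            have hxz : x ⊆ {z} := by
              intro u hu
              rcases Finset.mem_insert.mp (hsub hu) with h | h
              · exact absurd (h ▸ hu) (hBv x hxB)
              · exact h
            rcases Finset.subset_singleton_iff.mp hxz with rfl | rfl
            · exact hempty hxB
            · exact hxX (hXmem_sing _ hxB (Finset.card_singleton z)
                (Finset.singleton_subset_iff.mpr hz))
          intro x hx y hy hxy hsub
          rcases Finset.mem_union.mp hx with hx1 | hx2 <;>
            rcases Finset.mem_union.mp hy with hy1 | hy2
          · exact hanti x (Finset.mem_sdiff.mp hx1).1 y (Finset.mem_sdiff.mp hy1).1 hxy hsub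
          · -- x kept, y ∈ Y
            obtain ⟨hxB, hxX⟩ := Finset.mem_sdiff.mp hx1
            rw [hY] at hy2
            rcases Finset.mem_insert.mp hy2 with rfl | hy2
            · exact hcase_v a haNv x hxB hxX hsub
            rcases Finset.mem_insert.mp hy2 with rfl | hy2
            · exact hcase_v b hbNv x hxB hxX hsub
            rcases Finset.mem_insert.mp hy2 with rfl | hy2
            · exact hcase_v c hcNv x hxB hxX hsub
            · obtain ⟨_, hyNv, hy2c⟩ := hDprop y hy2
              have hxNv : x ⊆ Nv := hsub.trans hyNv
              have hcx : x.card ≤ 2 := by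
                have := Finset.card_le_card hsub; omega
              by_cases h0 : x.card = 0
              · exact hempty (Finset.card_eq_zero.mp h0 ▸ hxB)
              by_cases h1 : x.card = 1
              · exact hxX (hXmem_sing _ hxB h1 hxNv)
              · have hx2 : x.card = 2 := by omega
                exact hxy (Finset.eq_of_subset_of_card_le hsub (by omega))
          · -- x ∈ Y, y kept
            obtain ⟨hyB, hyX⟩ := Finset.mem_sdiff.mp hy1
            rw [hY] at hx2
            rcases Finset.mem_insert.mp hx2 with rfl | hx2
            · exact hBv y hyB (hsub (Finset.mem_insert_self v _))
            rcases Finset.mem_insert.mp hx2 with rfl | hx2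
            · exact hBv y hyB (hsub (Finset.mem_insert_self v _))
            rcases Finset.mem_insert.mp hx2 with rfl | hx2
            · exact hBv y hyB (hsub (Finset.mem_insert_self v _))
            · obtain ⟨⟨s, hsS, hsx⟩, _, hx2c⟩ := hDprop x hx2
              have hs1 := hSingcard1 s hsS
              have hycard : 2 ≤ y.card := by
                have := Finset.card_le_card hsub; omega
              refine hanti s (hSingB hsS) y hyB (fun h => ?_) (hsx.trans hsub)
              rw [h] at hs1; omega
          · -- both in Y
            have h2x := hYcard2 x hx2
            have h2y := hYcard2 y hy2
            exact hxy (Finset.eq_of_subset_of_card_le hsub (by omega))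
        have hfin : A'.card ≤ T.card := (antichain_card_le hA'H hA'anti).trans heavy
        have hXBcard : X.card ≤ B.card := Finset.card_le_card hXB
        have hSingXcard : Sing.card ≤ X.card := Finset.card_le_card hSingX
        by_cases hNvT : Nv ∈ T
        · have hXeq : X.card = Sing.card := by
            have hemp : B.filter (fun x => x = Nv ∧ Nv ∉ T) = ∅ := by
              rw [Finset.filter_eq_empty_iff]
              intro x hx h
              exact h.2 hNvT
            rw [hX, hemp, Finset.union_empty]
          have hTstareq : Tstar = T.filter (fun t => v ∉ t) := by
            rw [hTstar]
            exact Finset.insert_eq_self.mpr (Finset.mem_filter.mpr ⟨hNvT, hvNv⟩)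
          have hTscard : Tstar.card + 3 = T.card := by rw [hTstareq]; omega
          omega
        · have hnotmem : Nv ∉ T.filter (fun t => v ∉ t) :=
            fun h => hNvT (Finset.mem_of_mem_filter _ h)
          have hTscard : Tstar.card + 2 = T.card := by
            rw [hTstar, Finset.card_insert_of_notMem hnotmem]; omega
          omega
      have hIH := ih n Tstar hTstarcard_le hTstarIcc hTstar3 hTstarne hheavystar
      rw [hEstar, hVstar] at hIH
      omega

/-- For a nonempty heavy family `T` of 3-element sets with generated downset `H`,
the number of 2-element sets in `H` is at least twice the number of singletons. -/
theorem heavy_level_two_vs_one (n : ℕ) (T : Finset (Finset ℕ))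
    (hT : ∀ A ∈ T, A ⊆ Finset.Icc 1 n)
    (hTr : ∀ A ∈ T, A.card = 3)
    (hne : T.Nonempty)
    (heavy : width (downGen T) ≤ T.card) :
    2 * ((downGen T).filter (fun A => A.card = 1)).card ≤
      ((downGen T).filter (fun A => A.card = 2)).card :=
  key T.card n T le_rfl hT hTr hne heavy
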